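/- (Theorem 1(iv), speed-limit guarantee) Let 0 < v̲ ≤ ‖v̂‖ ≤ v̄ and set ṽ = min{v̄ − ‖v̂‖, ‖v̂‖ − v̲}. Along any solution of the closed-loop multi-sUAS system whose initial Hamiltonian satisfies H(t₀) ≤ (1/2)ṽ², every agent's speed remains within the limits: v̲ ≤ ‖q̇_i(t)‖ ≤ v̄ for all t ≥ t₀ and all i. -/

import Mathlib

open Finset RealInnerProductSpace

section helpers
variable {F : Type*} [NormedAddCommGroup F] [InnerProductSpace ℝ F]

lemma hasDerivAt_norm_sq' {f : ℝ → F} {f' : F} {t : ℝ} (hf : HasDerivAt f f' t) :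
    HasDerivAt (fun s => ‖f s‖ ^ 2) (2 * ⟪f t, f'⟫) t := by
  have h := hf.inner (𝕜 := ℝ) hf
  simp only [real_inner_comm (f t) f'] at h
  have : (fun s => ‖f s‖ ^ 2) = fun s => ⟪f s, f s⟫ := by
    funext s; exact (real_inner_self_eq_norm_sq (f s)).symm
  rw [this, two_mul]
  exact h

lemma hasDerivAt_comp_C1 {g g' : ℝ → ℝ} (hg : ContDiff ℝ 1 g) (hg' : deriv g = g')
    {f : ℝ → ℝ} {f' t : ℝ} (hf : HasDerivAt f f' t) :
    HasDerivAt (fun s => g (f s)) (g' (f t) * f') t := by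
  have hgd : HasDerivAt g (g' (f t)) (f t) := by
    rw [← hg']; exact ((hg.differentiable one_ne_zero) _).hasDerivAt
  exact hgd.comp t hf

lemma hasDerivAt_psi_sigma {ε : ℝ} (hε : 0 < ε) {ψ φ : ℝ → ℝ}
    (hψC1 : ContDiff ℝ 1 ψ) (hφ : deriv ψ = φ) {f : ℝ → F} {f' : F} {t : ℝ}
    (hf : HasDerivAt f f' t) :
    HasDerivAt (fun s => ψ ((1 / ε) * (Real.sqrt (1 + ε * ‖f s‖ ^ 2) - 1)))
      (φ ((1 / ε) * (Real.sqrt (1 + ε * ‖f t‖ ^ 2) - 1)) *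
        ((Real.sqrt (1 + ε * ‖f t‖ ^ 2))⁻¹ * ⟪f t, f'⟫)) t := by
  have hpos : (0:ℝ) < 1 + ε * ‖f t‖ ^ 2 := by positivity
  have h1 : HasDerivAt (fun s => 1 + ε * ‖f s‖ ^ 2) (ε * (2 * ⟪f t, f'⟫)) t :=
    ((hasDerivAt_norm_sq' hf).const_mul ε).const_add 1
  have h2 := h1.sqrt (ne_of_gt hpos)
  have h3 : HasDerivAt (fun s => (1 / ε) * (Real.sqrt (1 + ε * ‖f s‖ ^ 2) - 1))
      ((1 / ε) * (ε * (2 * ⟪f t, f'⟫) / (2 * Real.sqrt (1 + ε * ‖f t‖ ^ 2)))) t :=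
    (h2.sub_const 1).const_mul _
  have := hasDerivAt_comp_C1 hψC1 hφ h3
  convert this using 1
  have hs : Real.sqrt (1 + ε * ‖f t‖ ^ 2) ≠ 0 := by positivity
  field_simp

lemma sum_erase_swap {α : Type*} [Fintype α] [DecidableEq α] (f : α → α → ℝ) :
    ∑ i, ∑ j ∈ univ.erase i, f i j = ∑ i, ∑ j ∈ univ.erase i, f j i := by
  rw [Finset.sum_comm' (s' := fun j => univ.erase j) (t' := univ)]
  intro x y
  simp [Finset.mem_erase, eq_comm]

end helpers


/-- Theorem 1(iv), speed-limit guarantee: with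
`0 < v̲ ≤ ‖v̂‖ ≤ v̄` and `ṽ = min{v̄ − ‖v̂‖, ‖v̂‖ − v̲}`, if the initial Hamiltonian
satisfies `H(t₀) ≤ (1/2)ṽ²`, then every agent's speed remains within the limits:
`v̲ ≤ ‖q̇ᵢ(t)‖ ≤ v̄` for all `t ≥ t₀`. -/
theorem speed_limit_guarantee
    (N m : ℕ) (ε : ℝ) (hε : 0 < ε)
    -- agent positions and velocities
    (q qv : Fin N → ℝ → EuclideanSpace ℝ (Fin 3))
    -- boundary planes
    (A : Fin m → EuclideanSpace ℝ (Fin 3)) (b : Fin m → ℝ)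
    (hA : ∀ n, ‖A n‖ = 1)
    -- reference velocity, parallel to every boundary plane
    (vhat : EuclideanSpace ℝ (Fin 3)) (hvhat : ∀ n, ⟪A n, vhat⟫ = 0)
    -- potential functions
    (dhat dbhat : ℝ) (ψ ψb φ φb : ℝ → ℝ)
    (hψnn : ∀ d, 0 ≤ ψ d) (hψanti : Antitone ψ)
    (hψC1 : ContDiff ℝ 1 ψ) (hφ : deriv ψ = φ)
    (hψ0 : ∀ d, ψ d = 0 ↔ dhat ≤ d) (hψpos : ∀ d, 0 < ψ d ↔ d < dhat)
    (hψbnn : ∀ d, 0 ≤ ψb d) (hψbanti : Antitone ψb)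
    (hψbC1 : ContDiff ℝ 1 ψb) (hφb : deriv ψb = φb)
    (hψb0 : ∀ d, ψb d = 0 ↔ dbhat ≤ d) (hψbpos : ∀ d, 0 < ψb d ↔ d < dbhat)
    -- damping gains
    (K : Fin N → ℝ) (hK : ∀ i, 0 < K i)
    -- closed-loop double-integrator dynamics  q̈ᵢ = uᵢ
    (hq : ∀ i t, HasDerivAt (q i) (qv i t) t)
    (hqv : ∀ i t, HasDerivAt (qv i)
      (-(∑ j ∈ univ.erase i,
          (φ ((1 / ε) * (Real.sqrt (1 + ε * ‖q i t - q j t‖ ^ 2) - 1)) *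
            (Real.sqrt (1 + ε * ‖q i t - q j t‖ ^ 2))⁻¹) • (q i t - q j t))
        - (∑ n, φb (⟪A n, q i t⟫ - b n) • A n)
        - K i • (qv i t - vhat)) t)
    -- the Hamiltonian  H = V_p + V_k + V_b
    (t₀ : ℝ) (H : ℝ → ℝ)
    (hH : ∀ t, H t =
      (1 / 2) * ∑ i, ∑ j ∈ univ.erase i,
          ψ ((1 / ε) * (Real.sqrt (1 + ε * ‖q i t - q j t‖ ^ 2) - 1))
      + (1 / 2) * ∑ i, ‖qv i t - vhat‖ ^ 2
      + ∑ i, ∑ n, ψb (⟪A n, q i t⟫ - b n))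
    -- speed limits and initial-energy sublevel condition
    (vlo vhi : ℝ) (hvlo : 0 < vlo) (hlo : vlo ≤ ‖vhat‖) (hhi : ‖vhat‖ ≤ vhi)
    (hc : H t₀ ≤ (1 / 2) * (min (vhi - ‖vhat‖) (‖vhat‖ - vlo)) ^ 2) :
    ∀ t, t₀ ≤ t → ∀ i : Fin N, vlo ≤ ‖qv i t‖ ∧ ‖qv i t‖ ≤ vhi := by
  set vt := min (vhi - ‖vhat‖) (‖vhat‖ - vlo) with hvt
  have hvtnn : 0 ≤ vt := le_min (by linarith) (by linarith)
  set c : Fin N → Fin N → ℝ → ℝ := fun i j t =>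
    φ ((1 / ε) * (Real.sqrt (1 + ε * ‖q i t - q j t‖ ^ 2) - 1)) *
      (Real.sqrt (1 + ε * ‖q i t - q j t‖ ^ 2))⁻¹ with hc_def
  have hH' : ∀ t, HasDerivAt H (-∑ i, K i * ‖qv i t - vhat‖ ^ 2) t := by
    intro t
    have hHfun : H = fun s =>
      (1 / 2) * ∑ i, ∑ j ∈ univ.erase i,
          ψ ((1 / ε) * (Real.sqrt (1 + ε * ‖q i s - q j s‖ ^ 2) - 1))
      + (1 / 2) * ∑ i, ‖qv i s - vhat‖ ^ 2
      + ∑ i, ∑ n, ψb (⟪A n, q i s⟫ - b n) := funext hH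
    have hA' : HasDerivAt (fun s => (1 / 2) * ∑ i, ∑ j ∈ univ.erase i,
        ψ ((1 / ε) * (Real.sqrt (1 + ε * ‖q i s - q j s‖ ^ 2) - 1)))
        ((1 / 2) * ∑ i, ∑ j ∈ univ.erase i,
          c i j t * ⟪q i t - q j t, qv i t - qv j t⟫) t := by
      refine HasDerivAt.const_mul _ (HasDerivAt.fun_sum fun i _ => HasDerivAt.fun_sum fun j _ => ?_)
      have := hasDerivAt_psi_sigma hε hψC1 hφ ((hq i t).sub (hq j t))
      convert this using 1
      · rfl
      · rfl
      · rfl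
      simp only [hc_def, Pi.sub_apply]; ring
    have hB' : HasDerivAt (fun s => (1 / 2) * ∑ i, ‖qv i s - vhat‖ ^ 2)
        (∑ i, ⟪qv i t - vhat,
          -(∑ j ∈ univ.erase i, c i j t • (q i t - q j t))
          - (∑ n, φb (⟪A n, q i t⟫ - b n) • A n)
          - K i • (qv i t - vhat)⟫) t := by
      have := HasDerivAt.const_mul (1/2 : ℝ)
        (HasDerivAt.fun_sum (u := univ) fun i _ => hasDerivAt_norm_sq' ((hqv i t).sub_const vhat))
      convert this using 1
      · rfl
      · rfl
      rw [Finset.mul_sum]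
      refine Finset.sum_congr rfl fun i _ => ?_
      rw [hc_def]; ring
    have hC' : HasDerivAt (fun s => ∑ i, ∑ n, ψb (⟪A n, q i s⟫ - b n))
        (∑ i, ∑ n, φb (⟪A n, q i t⟫ - b n) * ⟪A n, qv i t⟫) t := by
      refine HasDerivAt.fun_sum fun i _ => HasDerivAt.fun_sum fun n _ => ?_
      have hinner : HasDerivAt (fun s => ⟪A n, q i s⟫ - b n) ⟪A n, qv i t⟫ t := by
        have := ((hasDerivAt_const t (A n)).inner (𝕜 := ℝ) (hq i t)).sub_const (b n)
        simpa using this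
      exact hasDerivAt_comp_C1 hψbC1 hφb hinner
    have hD := (hA'.fun_add hB').fun_add hC'
    rw [← hHfun] at hD
    convert hD using 1
    · rfl
    · rfl
    -- the algebraic identity
    have hexp : ∀ i, ⟪qv i t - vhat,
          -(∑ j ∈ univ.erase i, c i j t • (q i t - q j t))
          - (∑ n, φb (⟪A n, q i t⟫ - b n) • A n)
          - K i • (qv i t - vhat)⟫
        = -(∑ j ∈ univ.erase i, c i j t * ⟪qv i t - vhat, q i t - q j t⟫)
          - (∑ n, φb (⟪A n, q i t⟫ - b n) * ⟪A n, qv i t⟫)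
          - K i * ‖qv i t - vhat‖ ^ 2 := by
      intro i
      have hAn : ∀ n, ⟪qv i t - vhat, A n⟫ = ⟪A n, qv i t⟫ := by
        intro n
        rw [real_inner_comm, inner_sub_right, hvhat, sub_zero]
      have hw : ⟪qv i t - vhat, qv i t⟫ - ⟪qv i t - vhat, vhat⟫ = ‖qv i t - vhat‖ ^ 2 := by
        rw [← inner_sub_right, real_inner_self_eq_norm_sq]
      simp only [inner_sub_right, inner_neg_right, inner_sum, real_inner_smul_right, hAn]
      rw [hw]
    have heq : ∑ i, ⟪qv i t - vhat,
          -(∑ j ∈ univ.erase i, c i j t • (q i t - q j t))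
          - (∑ n, φb (⟪A n, q i t⟫ - b n) • A n)
          - K i • (qv i t - vhat)⟫
        = -(∑ i, ∑ j ∈ univ.erase i, c i j t * ⟪qv i t - vhat, q i t - q j t⟫)
          - (∑ i, ∑ n, φb (⟪A n, q i t⟫ - b n) * ⟪A n, qv i t⟫)
          - ∑ i, K i * ‖qv i t - vhat‖ ^ 2 := by
      rw [← Finset.sum_neg_distrib, ← Finset.sum_sub_distrib, ← Finset.sum_sub_distrib]
      exact Finset.sum_congr rfl fun i _ => hexp i
    rw [heq]
    -- symmetry of c
    have csymm : ∀ i j : Fin N, c j i t = c i j t := by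
      intro i j; simp only [hc_def, norm_sub_rev]
    -- S1 and the swap identity
    set S1 := ∑ i, ∑ j ∈ univ.erase i, c i j t * ⟪q i t - q j t, qv i t - vhat⟫ with hS1
    have hswap : ∑ i, ∑ j ∈ univ.erase i, c i j t * ⟪q i t - q j t, qv j t - vhat⟫ = -S1 := by
      rw [sum_erase_swap (fun i j => c i j t * ⟪q i t - q j t, qv j t - vhat⟫)]
      rw [hS1, ← Finset.sum_neg_distrib]
      refine Finset.sum_congr rfl fun i _ => ?_
      rw [← Finset.sum_neg_distrib]
      refine Finset.sum_congr rfl fun j _ => ?_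
      rw [csymm i j, ← neg_sub (q i t) (q j t), inner_neg_left]
      ring
    -- the potential term
    have hpot : ∑ i, ∑ j ∈ univ.erase i, c i j t * ⟪q i t - q j t, qv i t - qv j t⟫
        = S1 - (-S1) := by
      rw [← hswap, hS1, ← Finset.sum_sub_distrib]
      refine Finset.sum_congr rfl fun i _ => ?_
      rw [← Finset.sum_sub_distrib]
      refine Finset.sum_congr rfl fun j _ => ?_
      have : qv i t - qv j t = (qv i t - vhat) - (qv j t - vhat) := by abel
      rw [this, inner_sub_right]
      ring
    -- the middle term equals S1
    have hmid : ∑ i, ∑ j ∈ univ.erase i, c i j t * ⟪qv i t - vhat, q i t - q j t⟫ = S1 := by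
      rw [hS1]
      exact Finset.sum_congr rfl fun i _ => Finset.sum_congr rfl fun j _ => by
        rw [real_inner_comm]
    rw [hpot, hmid]
    ring
  -- H is antitone
  have hdiff : Differentiable ℝ H := fun t => (hH' t).differentiableAt
  have hderiv : ∀ t, deriv H t ≤ 0 := by
    intro t
    rw [(hH' t).deriv]
    simp only [neg_nonpos]
    exact Finset.sum_nonneg fun i _ => mul_nonneg (hK i).le (by positivity)
  have hanti : Antitone H := antitone_of_deriv_nonpos hdiff hderiv
  -- conclusion
  intro t ht i
  have h1 : H t ≤ (1 / 2) * vt ^ 2 := (hanti ht).trans hc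
  have h2 : (1 / 2) * ‖qv i t - vhat‖ ^ 2 ≤ H t := by
    rw [hH t]
    have hp : (0:ℝ) ≤ (1 / 2) * ∑ i, ∑ j ∈ univ.erase i,
        ψ ((1 / ε) * (Real.sqrt (1 + ε * ‖q i t - q j t‖ ^ 2) - 1)) :=
      mul_nonneg (by norm_num)
        (Finset.sum_nonneg fun _ _ => Finset.sum_nonneg fun _ _ => hψnn _)
    have hb : (0:ℝ) ≤ ∑ i, ∑ n, ψb (⟪A n, q i t⟫ - b n) :=
      Finset.sum_nonneg fun _ _ => Finset.sum_nonneg fun _ _ => hψbnn _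
    have hk : ‖qv i t - vhat‖ ^ 2 ≤ ∑ j, ‖qv j t - vhat‖ ^ 2 :=
      Finset.single_le_sum (f := fun j => ‖qv j t - vhat‖ ^ 2) (fun j _ => by positivity) (Finset.mem_univ i)
    linarith
  have hsq : ‖qv i t - vhat‖ ^ 2 ≤ vt ^ 2 := by linarith
  have hle : ‖qv i t - vhat‖ ≤ vt :=
    (pow_le_pow_iff_left₀ (norm_nonneg _) hvtnn two_ne_zero).mp hsq
  have hub : ‖qv i t‖ - ‖vhat‖ ≤ ‖qv i t - vhat‖ := norm_sub_norm_le _ _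
  have hlb : ‖vhat‖ - ‖qv i t‖ ≤ ‖qv i t - vhat‖ := by
    rw [norm_sub_rev]; exact norm_sub_norm_le _ _
  have hle1 : vt ≤ vhi - ‖vhat‖ := min_le_left _ _
  have hle2 : vt ≤ ‖vhat‖ - vlo := min_le_right _ _
  constructor <;> linarith
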